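/- Let X ⊂ ℝ² be a finite nonempty set of points written q = (q_c, q_r), and let F be the top frontier of C²(X). Then F is the graph of a concave function: for all q¹, q², q³ ∈ F with q¹_c ≤ q²_c ≤ q³_c and for λ ∈ [0,1] such that q²_c = (1−λ)q¹_c + λq³_c, one has q²_r ≥ (1−λ)q¹_r + λq³_r. -/

import Mathlib

/-- `C²(X)`: convex combinations of at most two points of `X` (points of `ℝ²` are
written `q = (q_c, q_r)`, cost first, reward second). -/
def C2 (X : Set (ℝ × ℝ)) : Set (ℝ × ℝ) :=
  {p | ∃ q1 ∈ X, ∃ q2 ∈ X, ∃ l : ℝ, l ∈ Set.Icc (0 : ℝ) 1 ∧ p = (1 - l) • q1 + l • q2}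

/-- Top frontier of a set `Y ⊆ ℝ²`:
`{q ∈ Y | there is no q' ∈ Y with q'_c = q_c and q'_r > q_r}`. -/
def topFrontier (Y : Set (ℝ × ℝ)) : Set (ℝ × ℝ) :=
  {q ∈ Y | ¬ ∃ q' ∈ Y, q'.1 = q.1 ∧ q.2 < q'.2}

/-- `q` is the dominant point `q^±` of `X`: a point of `X` with minimal cost `q_c`
among those maximizing the reward `q_r` over `X`. -/
def IsDominant (X : Set (ℝ × ℝ)) (q : ℝ × ℝ) : Prop :=
  q ∈ X ∧ (∀ q' ∈ X, q'.2 ≤ q.2) ∧ (∀ q' ∈ X, q'.2 = q.2 → q.1 ≤ q'.1)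

/-- Undominated points `Q⁻ = X \ Q⁺` where `Q⁺ = {q ∈ X : q_c > q^±_c}`. -/
def Qminus (X : Set (ℝ × ℝ)) (qpm : ℝ × ℝ) : Set (ℝ × ℝ) :=
  X \ {q ∈ X | qpm.1 < q.1}

/-- `p` is dominated at the same first coordinate by a point of `C2 S`. -/
def Good (S : Set (ℝ × ℝ)) (p : ℝ × ℝ) : Prop :=
  ∃ q ∈ C2 S, q.1 = p.1 ∧ p.2 ≤ q.2

lemma helper_left (x1 x2 x3 : ℝ × ℝ) (l1 l2 l3 : ℝ) (h1 : 0 ≤ l1) (h2 : 0 ≤ l2) (h3 : 0 ≤ l3)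
    (hsum : l1 + l2 + l3 = 1) (h12 : x1.1 ≤ x2.1) (h23 : x2.1 ≤ x3.1) (p : ℝ × ℝ)
    (hpc : p.1 = l1 * x1.1 + l2 * x2.1 + l3 * x3.1)
    (hpr : p.2 = l1 * x1.2 + l2 * x2.2 + l3 * x3.2)
    (hple : p.1 ≤ x2.1) :
    ∃ a ∈ ({x1, x2, x3} : Set (ℝ × ℝ)), ∃ b ∈ ({x1, x2, x3} : Set (ℝ × ℝ)),
      ∃ m : ℝ, 0 ≤ m ∧ m ≤ 1 ∧ (1 - m) * a.1 + m * b.1 = p.1 ∧ p.2 ≤ (1 - m) * a.2 + m * b.2 := by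
  have h13 : x1.1 ≤ x3.1 := h12.trans h23
  have ht_eq : p.1 - x1.1 = l2 * (x2.1 - x1.1) + l3 * (x3.1 - x1.1) := by
    linear_combination hpc + x1.1 * hsum
  have hr_eq : p.2 - x1.2 = l2 * (x2.2 - x1.2) + l3 * (x3.2 - x1.2) := by
    linear_combination hpr + x1.2 * hsum
  have ht0 : 0 ≤ p.1 - x1.1 := by
    nlinarith [mul_nonneg h2 (sub_nonneg.2 h12), mul_nonneg h3 (sub_nonneg.2 h13)]
  rcases eq_or_lt_of_le h12 with heq | hu
  · -- x1.1 = x2.1, hence p.1 = x1.1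
    have hp1 : p.1 = x1.1 := le_antisymm (by rw [heq]; exact hple) (by linarith)
    have h0 : l3 * (x3.1 - x1.1) = 0 := by linear_combination -ht_eq + hp1 + l2 * heq
    rcases mul_eq_zero.1 h0 with h30 | hv0
    · subst h30
      rcases le_total x1.2 x2.2 with hy | hy
      · refine ⟨x2, by simp, x2, by simp, 0, le_refl 0, zero_le_one, by ring_nf; linarith, ?_⟩
        nlinarith [hr_eq, mul_nonneg (show (0:ℝ) ≤ 1 - l2 by linarith) (sub_nonneg.2 hy)]
      · refine ⟨x1, by simp, x1, by simp, 0, le_refl 0, zero_le_one, by ring_nf; linarith, ?_⟩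
        nlinarith [hr_eq, mul_nonneg h2 (sub_nonneg.2 hy)]
    · have e3 : x3.1 = x1.1 := by linarith
      rcases le_total x1.2 x2.2 with hA | hA
      · rcases le_total x2.2 x3.2 with hB | hB
        · refine ⟨x3, by simp, x3, by simp, 0, le_refl 0, zero_le_one, by ring_nf; linarith, ?_⟩
          have hx : (l1 + l2 + l3) * x3.2 = x3.2 := by rw [hsum]; ring
          nlinarith [hx, mul_le_mul_of_nonneg_left (hA.trans hB) h1,
            mul_le_mul_of_nonneg_left hB h2]
        · refine ⟨x2, by simp, x2, by simp, 0, le_refl 0, zero_le_one, by ring_nf; linarith, ?_⟩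
          have hx : (l1 + l2 + l3) * x2.2 = x2.2 := by rw [hsum]; ring
          nlinarith [hx, mul_le_mul_of_nonneg_left hA h1, mul_le_mul_of_nonneg_left hB h3]
      · rcases le_total x1.2 x3.2 with hB | hB
        · refine ⟨x3, by simp, x3, by simp, 0, le_refl 0, zero_le_one, by ring_nf; linarith, ?_⟩
          have hx : (l1 + l2 + l3) * x3.2 = x3.2 := by rw [hsum]; ring
          nlinarith [hx, mul_le_mul_of_nonneg_left hB h1,
            mul_le_mul_of_nonneg_left (hA.trans hB) h2]
        · refine ⟨x1, by simp, x1, by simp, 0, le_refl 0, zero_le_one, by ring_nf; linarith, ?_⟩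
          have hx : (l1 + l2 + l3) * x1.2 = x1.2 := by rw [hsum]; ring
          nlinarith [hx, mul_le_mul_of_nonneg_left hA h2, mul_le_mul_of_nonneg_left hB h3]
  · -- x1.1 < x2.1
    have hu' : 0 < x2.1 - x1.1 := by linarith
    have hv : 0 < x3.1 - x1.1 := by linarith
    have hvne : x3.1 - x1.1 ≠ 0 := ne_of_gt hv
    have hune : x2.1 - x1.1 ≠ 0 := ne_of_gt hu'
    have htu : p.1 - x1.1 ≤ x2.1 - x1.1 := by linarith
    have htv : p.1 - x1.1 ≤ x3.1 - x1.1 := by linarith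
    rcases le_total ((x3.1 - x1.1) * (x2.2 - x1.2)) ((x2.1 - x1.1) * (x3.2 - x1.2)) with hc | hc
    · -- use the chord from x1 to x3
      have key : (x3.1 - p.1) * x1.2 + (p.1 - x1.1) * x3.2 - (x3.1 - x1.1) * p.2
          = l2 * ((x2.1 - x1.1) * (x3.2 - x1.2) - (x3.1 - x1.1) * (x2.2 - x1.2)) := by
        linear_combination (x3.2 - x1.2) * hpc - (x3.1 - x1.1) * hpr
          + ((x3.2 - x1.2) * x1.1 - (x3.1 - x1.1) * x1.2) * hsum
      refine ⟨x1, by simp, x3, by simp, (p.1 - x1.1) / (x3.1 - x1.1),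
        div_nonneg ht0 hv.le, (div_le_one hv).2 htv, ?_, ?_⟩
      · field_simp
        ring
      · rw [show (1 - (p.1 - x1.1) / (x3.1 - x1.1)) * x1.2 + (p.1 - x1.1) / (x3.1 - x1.1) * x3.2
            = ((x3.1 - p.1) * x1.2 + (p.1 - x1.1) * x3.2) / (x3.1 - x1.1) by field_simp; ring,
          le_div_iff₀ hv]
        linarith [key, mul_nonneg h2 (sub_nonneg.2 hc)]
    · -- use the chord from x1 to x2
      have key : (x2.1 - p.1) * x1.2 + (p.1 - x1.1) * x2.2 - (x2.1 - x1.1) * p.2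
          = l3 * ((x3.1 - x1.1) * (x2.2 - x1.2) - (x2.1 - x1.1) * (x3.2 - x1.2)) := by
        linear_combination (x2.2 - x1.2) * hpc - (x2.1 - x1.1) * hpr
          + ((x2.2 - x1.2) * x1.1 - (x2.1 - x1.1) * x1.2) * hsum
      refine ⟨x1, by simp, x2, by simp, (p.1 - x1.1) / (x2.1 - x1.1),
        div_nonneg ht0 hu'.le, (div_le_one hu').2 htu, ?_, ?_⟩
      · field_simp
        ring
      · rw [show (1 - (p.1 - x1.1) / (x2.1 - x1.1)) * x1.2 + (p.1 - x1.1) / (x2.1 - x1.1) * x2.2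
            = ((x2.1 - p.1) * x1.2 + (p.1 - x1.1) * x2.2) / (x2.1 - x1.1) by field_simp; ring,
          le_div_iff₀ hu']
        linarith [key, mul_nonneg h3 (sub_nonneg.2 hc)]
lemma helper_mid (x1 x2 x3 : ℝ × ℝ) (l1 l2 l3 : ℝ) (h1 : 0 ≤ l1) (h2 : 0 ≤ l2) (h3 : 0 ≤ l3)
    (hsum : l1 + l2 + l3 = 1) (h12 : x1.1 ≤ x2.1) (h23 : x2.1 ≤ x3.1) (p : ℝ × ℝ)
    (hpc : p.1 = l1 * x1.1 + l2 * x2.1 + l3 * x3.1)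
    (hpr : p.2 = l1 * x1.2 + l2 * x2.2 + l3 * x3.2) :
    ∃ a ∈ ({x1, x2, x3} : Set (ℝ × ℝ)), ∃ b ∈ ({x1, x2, x3} : Set (ℝ × ℝ)),
      ∃ m : ℝ, 0 ≤ m ∧ m ≤ 1 ∧ (1 - m) * a.1 + m * b.1 = p.1 ∧ p.2 ≤ (1 - m) * a.2 + m * b.2 := by
  rcases le_total p.1 x2.1 with hle | hge
  · exact helper_left x1 x2 x3 l1 l2 l3 h1 h2 h3 hsum h12 h23 p hpc hpr hle
  · obtain ⟨a, ha, b, hb, m, hm0, hm1, e1, e2⟩ :=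
      helper_left (-x3.1, x3.2) (-x2.1, x2.2) (-x1.1, x1.2) l3 l2 l1 h3 h2 h1 (by linarith)
        (by simpa using h23) (by simpa using h12) (-p.1, p.2)
        (by simp; linarith) (by simp; linarith) (by simpa using hge)
    have conv : ∀ c : ℝ × ℝ,
        c ∈ ({(-x3.1, x3.2), (-x2.1, x2.2), (-x1.1, x1.2)} : Set (ℝ × ℝ)) →
        ∃ d ∈ ({x1, x2, x3} : Set (ℝ × ℝ)), c.1 = -d.1 ∧ c.2 = d.2 := by
      intro c hc
      simp only [Set.mem_insert_iff, Set.mem_singleton_iff] at hc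
      rcases hc with rfl | rfl | rfl
      · exact ⟨x3, by simp, by simp, by simp⟩
      · exact ⟨x2, by simp, by simp, by simp⟩
      · exact ⟨x1, by simp, by simp, by simp⟩
    obtain ⟨a', ha', ha1, ha2⟩ := conv a ha
    obtain ⟨b', hb', hb1, hb2⟩ := conv b hb
    refine ⟨a', ha', b', hb', m, hm0, hm1, ?_, ?_⟩
    · have := e1
      rw [ha1, hb1] at this
      simp at this
      linarith
    · have := e2
      rw [ha2, hb2] at this
      simpa using this

lemma tri (x1 x2 x3 : ℝ × ℝ) (l1 l2 l3 : ℝ) (h1 : 0 ≤ l1) (h2 : 0 ≤ l2) (h3 : 0 ≤ l3)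
    (hsum : l1 + l2 + l3 = 1) (p : ℝ × ℝ)
    (hpc : p.1 = l1 * x1.1 + l2 * x2.1 + l3 * x3.1)
    (hpr : p.2 = l1 * x1.2 + l2 * x2.2 + l3 * x3.2) :
    ∃ a ∈ ({x1, x2, x3} : Set (ℝ × ℝ)), ∃ b ∈ ({x1, x2, x3} : Set (ℝ × ℝ)),
      ∃ m : ℝ, 0 ≤ m ∧ m ≤ 1 ∧ (1 - m) * a.1 + m * b.1 = p.1 ∧ p.2 ≤ (1 - m) * a.2 + m * b.2 := by
  rcases le_total x1.1 x2.1 with a12 | a21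
  · rcases le_total x2.1 x3.1 with a23 | a32
    · exact helper_mid x1 x2 x3 l1 l2 l3 h1 h2 h3 hsum a12 a23 p hpc hpr
    · rcases le_total x1.1 x3.1 with a13 | a31
      · obtain ⟨a, ha, b, hb, r⟩ :=
          helper_mid x1 x3 x2 l1 l3 l2 h1 h3 h2 (by linarith) a13 a32 p (by linarith) (by linarith)
        exact ⟨a, by simp at ha ⊢; tauto, b, by simp at hb ⊢; tauto, r⟩
      · obtain ⟨a, ha, b, hb, r⟩ :=
          helper_mid x3 x1 x2 l3 l1 l2 h3 h1 h2 (by linarith) a31 a12 p (by linarith) (by linarith)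
        exact ⟨a, by simp at ha ⊢; tauto, b, by simp at hb ⊢; tauto, r⟩
  · rcases le_total x1.1 x3.1 with a13 | a31
    · obtain ⟨a, ha, b, hb, r⟩ :=
        helper_mid x2 x1 x3 l2 l1 l3 h2 h1 h3 (by linarith) a21 a13 p (by linarith) (by linarith)
      exact ⟨a, by simp at ha ⊢; tauto, b, by simp at hb ⊢; tauto, r⟩
    · rcases le_total x2.1 x3.1 with a23 | a32
      · obtain ⟨a, ha, b, hb, r⟩ :=
          helper_mid x2 x3 x1 l2 l3 l1 h2 h3 h1 (by linarith) a23 a31 p (by linarith) (by linarith)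
        exact ⟨a, by simp at ha ⊢; tauto, b, by simp at hb ⊢; tauto, r⟩
      · obtain ⟨a, ha, b, hb, r⟩ :=
          helper_mid x3 x2 x1 l3 l2 l1 h3 h2 h1 (by linarith) a32 a21 p (by linarith) (by linarith)
        exact ⟨a, by simp at ha ⊢; tauto, b, by simp at hb ⊢; tauto, r⟩

lemma good_three {S : Set (ℝ × ℝ)} {x1 x2 x3 : ℝ × ℝ} (hx1 : x1 ∈ S) (hx2 : x2 ∈ S)
    (hx3 : x3 ∈ S) {l1 l2 l3 : ℝ} (h1 : 0 ≤ l1) (h2 : 0 ≤ l2) (h3 : 0 ≤ l3)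
    (hsum : l1 + l2 + l3 = 1) (p : ℝ × ℝ)
    (hpc : p.1 = l1 * x1.1 + l2 * x2.1 + l3 * x3.1)
    (hpr : p.2 = l1 * x1.2 + l2 * x2.2 + l3 * x3.2) :
    Good S p := by
  obtain ⟨a, ha, b, hb, m, hm0, hm1, e1, e2⟩ := tri x1 x2 x3 l1 l2 l3 h1 h2 h3 hsum p hpc hpr
  have haS : a ∈ S := by
    simp only [Set.mem_insert_iff, Set.mem_singleton_iff] at ha
    rcases ha with rfl | rfl | rfl <;> assumption
  have hbS : b ∈ S := by
    simp only [Set.mem_insert_iff, Set.mem_singleton_iff] at hb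
    rcases hb with rfl | rfl | rfl <;> assumption
  refine ⟨(1 - m) • a + m • b, ⟨a, haS, b, hbS, m, ⟨hm0, hm1⟩, rfl⟩, ?_, ?_⟩
  · simpa [smul_eq_mul] using e1
  · simpa [smul_eq_mul] using e2
lemma good_of_mem_hull (Y : Finset (ℝ × ℝ)) :
    ∀ p ∈ convexHull ℝ (Y : Set (ℝ × ℝ)), Good (Y : Set (ℝ × ℝ)) p := by
  induction Y using Finset.induction_on with
  | empty => simp
  | @insert x s hx IH =>
    intro p hp
    rw [Finset.coe_insert] at hp ⊢
    rcases s.eq_empty_or_nonempty with rfl | hs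
    · have hp' : p = x := by
        simpa [convexHull_singleton] using hp
      refine ⟨x, ⟨x, by simp, x, by simp, 0, ⟨le_refl 0, zero_le_one⟩, by simp⟩, ?_, ?_⟩ <;>
        simp [hp']
    · rw [convexHull_insert (by exact_mod_cast hs)] at hp
      rw [mem_convexJoin] at hp
      obtain ⟨x', hx', z, hz, hseg⟩ := hp
      rw [Set.mem_singleton_iff] at hx'
      rw [hx'] at hseg
      obtain ⟨a, b, ha, hb, hab, hpeq⟩ := hseg
      obtain ⟨q', ⟨c, hc, d, hd, mu, ⟨hmu0, hmu1⟩, hq'eq⟩, hq'1, hq'2⟩ := IH z hz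
      have hp1 : a * x.1 + b * z.1 = p.1 := by rw [← hpeq]; simp
      have hp2 : a * x.2 + b * z.2 = p.2 := by rw [← hpeq]; simp
      have hz1 : z.1 = (1 - mu) * c.1 + mu * d.1 := by
        rw [← hq'1, hq'eq]; simp
      have hq'2eq : q'.2 = (1 - mu) * c.2 + mu * d.2 := by rw [hq'eq]; simp
      have hgr : Good (insert x (s : Set (ℝ × ℝ))) (p.1, a * x.2 + b * q'.2) := by
        refine good_three (l1 := a) (l2 := b * (1 - mu)) (l3 := b * mu)
          (Set.mem_insert x _) (Set.mem_insert_of_mem _ hc)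
          (Set.mem_insert_of_mem _ hd) ha (mul_nonneg hb (by linarith))
          (mul_nonneg hb hmu0) (by ring_nf; linarith) _ ?_ ?_
        · show p.1 = a * x.1 + b * (1 - mu) * c.1 + b * mu * d.1
          linear_combination -hp1 + b * hz1
        · show a * x.2 + b * q'.2 = a * x.2 + b * (1 - mu) * c.2 + b * mu * d.2
          linear_combination b * hq'2eq
      obtain ⟨q, hqC, hq1, hq2⟩ := hgr
      refine ⟨q, hqC, hq1, ?_⟩
      have : p.2 ≤ a * x.2 + b * q'.2 := by nlinarith [mul_le_mul_of_nonneg_left hq'2 hb]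
      exact this.trans hq2

lemma C2_subset_hull (X : Set (ℝ × ℝ)) : C2 X ⊆ convexHull ℝ X := by
  rintro p ⟨q1, hq1, q2, hq2, l, ⟨hl0, hl1⟩, rfl⟩
  exact (convex_convexHull ℝ X) (subset_convexHull ℝ X hq1) (subset_convexHull ℝ X hq2)
    (by linarith) hl0 (by ring)

/-- The top frontier `F` of `C²(X)` is the graph of a concave function: for all
`q¹, q², q³ ∈ F` with `q¹_c ≤ q²_c ≤ q³_c` and `λ ∈ [0,1]` such that
`q²_c = (1−λ)q¹_c + λq³_c`, one has `q²_r ≥ (1−λ)q¹_r + λq³_r`. -/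
theorem topFrontier_concave (X : Finset (ℝ × ℝ)) (hX : X.Nonempty) :
    ∀ q1 ∈ topFrontier (C2 (X : Set (ℝ × ℝ))),
    ∀ q2 ∈ topFrontier (C2 (X : Set (ℝ × ℝ))),
    ∀ q3 ∈ topFrontier (C2 (X : Set (ℝ × ℝ))),
      q1.1 ≤ q2.1 → q2.1 ≤ q3.1 →
      ∀ l ∈ Set.Icc (0 : ℝ) 1, q2.1 = (1 - l) * q1.1 + l * q3.1 →
        (1 - l) * q1.2 + l * q3.2 ≤ q2.2 := by
  intro q1 hq1 q2 hq2 q3 hq3 h12 h23 l hl heq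
  obtain ⟨hl0, hl1⟩ := hl
  have hq1C : q1 ∈ C2 (X : Set (ℝ × ℝ)) := hq1.1
  have hq3C : q3 ∈ C2 (X : Set (ℝ × ℝ)) := hq3.1
  have hp : ((1 - l) • q1 + l • q3 : ℝ × ℝ) ∈ convexHull ℝ (X : Set (ℝ × ℝ)) :=
    (convex_convexHull ℝ _) (C2_subset_hull _ hq1C) (C2_subset_hull _ hq3C)
      (by linarith) hl0 (by ring)
  obtain ⟨q, hqC, hq1eq, hq2le⟩ := good_of_mem_hull X _ hp
  by_contra hcon
  push_neg at hcon
  refine hq2.2 ⟨q, hqC, ?_, ?_⟩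
  · rw [hq1eq]
    simpa using heq.symm
  · calc q2.2 < (1 - l) * q1.2 + l * q3.2 := hcon
      _ ≤ q.2 := by simpa using hq2le
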